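/- Integral form of the quasi-static energy cost: let t ↦ ρ(t) be a continuously differentiable map from ℝ into the density matrices on ℂ^d with ρ(t) faithful for every t ∈ (0,1]. Then the (possibly improper) integral ∫₀¹ tr(ρ'(t)·log ρ(t)) dt converges and equals S(ρ(0)) − S(ρ(1)). -/

import Mathlib

open Matrix Kronecker ComplexOrder

/-- Logarithm of a matrix, defined via the spectral theorem for Hermitian matrices
(junk value `0` on non-Hermitian matrices).  Since `Real.log 0 = 0`, for a positive
semidefinite matrix this is the logarithm taken on the support, with the convention
`log 0 = 0` on the kernel. -/
noncomputable def mlog {n : Type*} [Fintype n] [DecidableEq n] (A : Matrix n n ℂ) :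
    Matrix n n ℂ :=
  if hA : A.IsHermitian then
    (hA.eigenvectorUnitary : Matrix n n ℂ) *
      Matrix.diagonal (fun i => (Real.log (hA.eigenvalues i) : ℂ)) *
      (star hA.eigenvectorUnitary : Matrix n n ℂ)
  else 0

/-- von Neumann entropy `S(ρ) = -tr(ρ log ρ)`. -/
noncomputable def vnEnt {n : Type*} [Fintype n] [DecidableEq n] (ρ : Matrix n n ℂ) : ℝ :=
  -(Matrix.trace (ρ * mlog ρ)).re

/-- Relative entropy `S(ζ₁|ζ₂) = tr(ζ₁ (log ζ₁ - log ζ₂))`. -/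
noncomputable def relEnt {n : Type*} [Fintype n] [DecidableEq n] (ζ₁ ζ₂ : Matrix n n ℂ) : ℝ :=
  (Matrix.trace (ζ₁ * (mlog ζ₁ - mlog ζ₂))).re

/-- A density matrix: positive semidefinite with unit trace. -/
def IsDensityMatrix {n : Type*} [Fintype n] [DecidableEq n] (ρ : Matrix n n ℂ) : Prop :=
  ρ.PosSemidef ∧ ρ.trace = 1

/-- Partial trace over the reservoir (second) factor:
`(tr_R M)_{ij} = Σ_k M_{(i,k),(j,k)}`. -/
noncomputable def ptraceR {dS dR : ℕ} (M : Matrix (Fin dS × Fin dR) (Fin dS × Fin dR) ℂ) :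
    Matrix (Fin dS) (Fin dS) ℂ :=
  Matrix.of fun i j => ∑ k, M (i, k) (j, k)

/-- Partial trace over the system (first) factor:
`(tr_S M)_{kl} = Σ_i M_{(i,k),(i,l)}`. -/
noncomputable def ptraceS {dS dR : ℕ} (M : Matrix (Fin dS × Fin dR) (Fin dS × Fin dR) ℂ) :
    Matrix (Fin dR) (Fin dR) ℂ :=
  Matrix.of fun k l => ∑ i, M (i, k) (i, l)

/-- The Gibbs state `e^{-βH}/tr(e^{-βH})` at inverse temperature `β`. -/
noncomputable def gibbs {dR : ℕ} (β : ℝ) (H : Matrix (Fin dR) (Fin dR) ℂ) :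
    Matrix (Fin dR) (Fin dR) ℂ :=
  (Matrix.trace (NormedSpace.exp ((-β : ℂ) • H)))⁻¹ • NormedSpace.exp ((-β : ℂ) • H)

/-- The trace norm `‖X‖₁ = tr((X*X)^{1/2})`. -/
noncomputable def traceNorm {n : Type*} [Fintype n] [DecidableEq n] (X : Matrix n n ℂ) : ℝ :=
  (Matrix.trace ((Matrix.posSemidef_conjTranspose_mul_self X).1.eigenvectorUnitary.1 *
    Matrix.diagonal (((↑) : ℝ → ℂ) ∘ Real.sqrt ∘ (Matrix.posSemidef_conjTranspose_mul_self X).1.eigenvalues) *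
    (star (Matrix.posSemidef_conjTranspose_mul_self X).1.eigenvectorUnitary : Matrix n n ℂ))).re


section scalar
open intervalIntegral Set

lemma denom_pos {l : ℝ} (hl : 0 < l) {u : ℝ} (hu : u ∈ Set.Icc (0:ℝ) 1) :
    0 < 1 + u * (l - 1) := by
  rcases hu with ⟨h0, h1⟩
  rcases eq_or_lt_of_le h1 with rfl | h1
  · nlinarith
  · nlinarith [mul_nonneg h0 hl.le]

lemma scalar_cont {l : ℝ} (hl : 0 < l) :
    ContinuousOn (fun u : ℝ => 1 + u * (l-1)) (Set.Icc (0:ℝ) 1) := by fun_prop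

lemma hasDerivAt_denom (l u : ℝ) : HasDerivAt (fun u : ℝ => 1 + u * (l-1)) (l-1) u := by
  simpa using ((hasDerivAt_id u).mul_const (l-1)).const_add 1

lemma scalar1 {l : ℝ} (hl : 0 < l) :
    ∫ u in (0:ℝ)..1, l*(l-1)/(1+u*(l-1)) = l * Real.log l := by
  have key : ∀ u ∈ Set.uIcc (0:ℝ) 1,
      HasDerivAt (fun u : ℝ => l * Real.log (1+u*(l-1))) (l*(l-1)/(1+u*(l-1))) u := by
    intro u hu
    rw [Set.uIcc_of_le (by norm_num)] at hu
    have h := ((Real.hasDerivAt_log (denom_pos hl hu).ne').comp u (hasDerivAt_denom l u)).const_mul l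
    refine h.congr_deriv ?_
    ring
  have hInt : IntervalIntegrable (fun u : ℝ => l*(l-1)/(1+u*(l-1))) MeasureTheory.volume 0 1 := by
    apply ContinuousOn.intervalIntegrable
    rw [Set.uIcc_of_le (by norm_num)]
    exact (continuousOn_const.div (scalar_cont hl) (fun u hu => (denom_pos hl hu).ne'))
  rw [integral_eq_sub_of_hasDerivAt key hInt, show (1:ℝ) + 1 * (l-1) = l by ring,
    show (1:ℝ) + 0 * (l-1) = 1 by ring, Real.log_one, mul_zero, sub_zero]

lemma scalar2 {l : ℝ} (hl : 0 < l) :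
    ∫ u in (0:ℝ)..1, ((2*l-1)/(1+u*(l-1)) - u*(l*(l-1))/(1+u*(l-1))^2)
      = Real.log l + 1 := by
  have key : ∀ u ∈ Set.uIcc (0:ℝ) 1,
      HasDerivAt (fun u : ℝ => Real.log (1+u*(l-1)) + l*(u/(1+u*(l-1))))
        ((2*l-1)/(1+u*(l-1)) - u*(l*(l-1))/(1+u*(l-1))^2) u := by
    intro u hu
    rw [Set.uIcc_of_le (by norm_num)] at hu
    have hd := denom_pos hl hu
    have h1 := (Real.hasDerivAt_log hd.ne').comp u (hasDerivAt_denom l u)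
    have h2 := (((hasDerivAt_id u).div (hasDerivAt_denom l u) hd.ne')).const_mul l
    have h := h1.add h2
    refine h.congr_deriv ?_
    simp only [id]
    field_simp
    ring
  have hInt : IntervalIntegrable
      (fun u : ℝ => (2*l-1)/(1+u*(l-1)) - u*(l*(l-1))/(1+u*(l-1))^2) MeasureTheory.volume 0 1 := by
    apply ContinuousOn.intervalIntegrable
    rw [Set.uIcc_of_le (by norm_num)]
    apply ContinuousOn.sub
    · exact continuousOn_const.div (scalar_cont hl) (fun u hu => (denom_pos hl hu).ne')
    · exact ContinuousOn.div (by fun_prop) ((scalar_cont hl).pow 2)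
        (fun u hu => pow_ne_zero _ (denom_pos hl hu).ne')
  rw [integral_eq_sub_of_hasDerivAt key hInt, show (1:ℝ) + 1 * (l-1) = l by ring,
    show (1:ℝ) + 0 * (l-1) = 1 by ring, Real.log_one]
  field_simp
  ring

end scalar

section conj
variable {n : Type*} [Fintype n] [DecidableEq n]

/-- conjugation by a unitary collapses products -/
lemma conj_mul_conj {U : Matrix n n ℂ} (hUr : star U * U = 1) (A B : Matrix n n ℂ) :
    (U * A * star U) * (U * B * star U) = U * (A * B) * star U := by
  calc (U * A * star U) * (U * B * star U)
      = U * A * ((star U * U) * (B * star U)) := by simp only [mul_assoc]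
    _ = U * (A * B) * star U := by rw [hUr, one_mul]; simp only [mul_assoc]

lemma trace_conj {U : Matrix n n ℂ} (hUr : star U * U = 1) (A : Matrix n n ℂ) :
    Matrix.trace (U * A * star U) = Matrix.trace A := by
  rw [Matrix.trace_mul_cycle, hUr, one_mul]

lemma trace_mul_diag (A : Matrix n n ℂ) (v : n → ℂ) :
    Matrix.trace (A * Matrix.diagonal v) = ∑ i, A i i * v i := by
  simp [Matrix.trace, Matrix.diag, Matrix.mul_apply, Matrix.diagonal]

lemma trace_mul_conj_diag {U : Matrix n n ℂ} (hUr : star U * U = 1)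
    (X : Matrix n n ℂ) (v : n → ℂ) :
    Matrix.trace (X * (U * Matrix.diagonal v * star U)) = ∑ i, (star U * X * U) i i * v i := by
  rw [show X * (U * Matrix.diagonal v * star U) = X * U * Matrix.diagonal v * star U by
    simp only [mul_assoc]]
  rw [Matrix.trace_mul_cycle, trace_mul_diag]
  simp only [mul_assoc]

lemma inverse_conj_diag {U : Matrix n n ℂ} (hUl : U * star U = 1) (hUr : star U * U = 1)
    {v : n → ℂ} (hv : ∀ i, v i ≠ 0) :
    Ring.inverse (U * Matrix.diagonal v * star U)
      = U * Matrix.diagonal (fun i => (v i)⁻¹) * star U := by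
  rw [← Matrix.nonsing_inv_eq_ringInverse]
  apply Matrix.inv_eq_right_inv
  rw [conj_mul_conj hUr, Matrix.diagonal_mul_diagonal]
  have : (fun i => v i * (v i)⁻¹) = fun _ => (1:ℂ) := by
    funext i; exact mul_inv_cancel₀ (hv i)
  rw [show (Matrix.diagonal fun i => v i * (v i)⁻¹) = (1 : Matrix n n ℂ) by
    rw [this, Matrix.diagonal_one]]
  rw [mul_one, hUl]

end conj

section spec
variable {n : Type*} [Fintype n] [DecidableEq n]

noncomputable def Bmat (A : Matrix n n ℂ) (u : ℝ) : Matrix n n ℂ := 1 + (u:ℂ) • (A - 1)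

lemma mlog_eq {A : Matrix n n ℂ} (hA : A.IsHermitian) :
    mlog A = (hA.eigenvectorUnitary : Matrix n n ℂ) *
      Matrix.diagonal (fun i => (Real.log (hA.eigenvalues i) : ℂ)) *
      (star hA.eigenvectorUnitary : Matrix n n ℂ) := by
  unfold mlog
  exact dif_pos hA

lemma spectral' {A : Matrix n n ℂ} (hA : A.IsHermitian) :
    A = (hA.eigenvectorUnitary : Matrix n n ℂ) *
      Matrix.diagonal (fun i => (hA.eigenvalues i : ℂ)) *
      (star hA.eigenvectorUnitary : Matrix n n ℂ) := by
  convert hA.spectral_theorem using 3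
  rfl

lemma eigvec_unitary_left {A : Matrix n n ℂ} (hA : A.IsHermitian) :
    (hA.eigenvectorUnitary : Matrix n n ℂ) * star (hA.eigenvectorUnitary : Matrix n n ℂ) = 1 :=
  Matrix.mem_unitaryGroup_iff.mp hA.eigenvectorUnitary.2

lemma eigvec_unitary_right {A : Matrix n n ℂ} (hA : A.IsHermitian) :
    star (hA.eigenvectorUnitary : Matrix n n ℂ) * (hA.eigenvectorUnitary : Matrix n n ℂ) = 1 :=
  Matrix.mem_unitaryGroup_iff'.mp hA.eigenvectorUnitary.2

/-- `Bmat` in the eigenbasis. -/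
lemma Bmat_conj {A : Matrix n n ℂ} (hA : A.IsHermitian) (u : ℝ) :
    Bmat A u = (hA.eigenvectorUnitary : Matrix n n ℂ) *
      Matrix.diagonal (fun i => ((1 + u * (hA.eigenvalues i - 1) : ℝ) : ℂ)) *
      (star hA.eigenvectorUnitary : Matrix n n ℂ) := by
  set U := (hA.eigenvectorUnitary : Matrix n n ℂ)
  have hUl : U * star U = 1 := eigvec_unitary_left hA
  have key : Matrix.diagonal (fun i => ((1 + u * (hA.eigenvalues i - 1) : ℝ) : ℂ))
      = Matrix.diagonal (fun _ => (1:ℂ)) + (u:ℂ) •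
        (Matrix.diagonal (fun i => (hA.eigenvalues i : ℂ)) - Matrix.diagonal (fun _ => (1:ℂ))) := by
    ext i j
    rcases eq_or_ne i j with rfl | hij
    · push_cast [Matrix.diagonal_apply_eq]
      simp
    · simp [Matrix.diagonal_apply_ne _ hij, Matrix.one_apply_ne hij]
  rw [Bmat, key, Matrix.mul_add, Matrix.add_mul, Matrix.mul_smul, Matrix.smul_mul,
    Matrix.mul_sub, Matrix.sub_mul, ← spectral' hA, Matrix.diagonal_one, mul_one, hUl]

end spec

section key
open intervalIntegral Set
variable {n : Type*} [Fintype n] [DecidableEq n]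

lemma sand_mul {U : Matrix n n ℂ} (hUl : U * star U = 1) (A B : Matrix n n ℂ) :
    star U * (A * B) * U = (star U * A * U) * (star U * B * U) := by
  symm
  calc (star U * A * U) * (star U * B * U) = star U * A * ((U * star U) * (B * U)) := by
        simp only [mul_assoc]
    _ = star U * (A * B) * U := by rw [hUl, one_mul]; simp only [mul_assoc]

lemma sand_spec {A : Matrix n n ℂ} (hA : A.IsHermitian) :
    star (hA.eigenvectorUnitary : Matrix n n ℂ) * A * (hA.eigenvectorUnitary : Matrix n n ℂ)
      = Matrix.diagonal (fun i => (hA.eigenvalues i : ℂ)) := by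
  nth_rewrite 2 [spectral' hA]
  rw [show star (hA.eigenvectorUnitary : Matrix n n ℂ) *
      ((hA.eigenvectorUnitary : Matrix n n ℂ) * Matrix.diagonal (fun i => (hA.eigenvalues i : ℂ)) *
        star (hA.eigenvectorUnitary : Matrix n n ℂ)) * (hA.eigenvectorUnitary : Matrix n n ℂ)
      = (star (hA.eigenvectorUnitary : Matrix n n ℂ) * (hA.eigenvectorUnitary : Matrix n n ℂ)) *
        Matrix.diagonal (fun i => (hA.eigenvalues i : ℂ)) *
        (star (hA.eigenvectorUnitary : Matrix n n ℂ) * (hA.eigenvectorUnitary : Matrix n n ℂ))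
      from by simp only [mul_assoc], eigvec_unitary_right hA, one_mul, mul_one]

lemma Binv_conj {A : Matrix n n ℂ} (hA : A.PosDef) {u : ℝ} (hu : u ∈ Set.Icc (0:ℝ) 1) :
    Ring.inverse (Bmat A u) = (hA.1.eigenvectorUnitary : Matrix n n ℂ) *
      Matrix.diagonal (fun i => (((1 + u * (hA.1.eigenvalues i - 1))⁻¹ : ℝ) : ℂ)) *
      (star hA.1.eigenvectorUnitary : Matrix n n ℂ) := by
  rw [Bmat_conj hA.1 u, inverse_conj_diag (eigvec_unitary_left hA.1) (eigvec_unitary_right hA.1)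
    (fun i => by exact_mod_cast (denom_pos (hA.eigenvalues_pos i) hu).ne')]
  congr 1
  funext i
  push_cast
  ring

lemma scalar_integrable1 {l : ℝ} (hl : 0 < l) :
    IntervalIntegrable (fun u : ℝ => l*(l-1)/(1+u*(l-1))) MeasureTheory.volume 0 1 := by
  apply ContinuousOn.intervalIntegrable
  rw [Set.uIcc_of_le (by norm_num)]
  exact continuousOn_const.div (scalar_cont hl) (fun u hu => (denom_pos hl hu).ne')

lemma diag_sq_sub {lam : n → ℝ} :
    Matrix.diagonal (fun i => (lam i : ℂ)) * Matrix.diagonal (fun i => (lam i : ℂ))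
        - Matrix.diagonal (fun i => (lam i : ℂ))
      = Matrix.diagonal (fun i => ((lam i * lam i - lam i : ℝ) : ℂ)) := by
  rw [Matrix.diagonal_mul_diagonal]
  ext i j
  rcases eq_or_ne i j with rfl | hij
  · push_cast [Matrix.diagonal_apply_eq, Matrix.sub_apply]; ring
  · simp [Matrix.diagonal_apply_ne _ hij]

lemma keyA {A : Matrix n n ℂ} (hA : A.PosDef) :
    ∫ u in (0:ℝ)..1, (Matrix.trace ((A * A - A) * Ring.inverse (Bmat A u))).re
      = (Matrix.trace (A * mlog A)).re := by
  have hUl := eigvec_unitary_left hA.1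
  have hUr := eigvec_unitary_right hA.1
  set U := (hA.1.eigenvectorUnitary : Matrix n n ℂ) with hUdef
  set lam := hA.1.eigenvalues with hlamdef
  have hpos : ∀ i, 0 < lam i := hA.eigenvalues_pos
  have hsand : star U * (A * A - A) * U
      = Matrix.diagonal (fun i => ((lam i * lam i - lam i : ℝ) : ℂ)) := by
    rw [Matrix.mul_sub, Matrix.sub_mul, sand_mul hUl, sand_spec hA.1, diag_sq_sub]
  have hEq : Set.EqOn (fun u => (Matrix.trace ((A * A - A) * Ring.inverse (Bmat A u))).re)
      (fun u => ∑ i, lam i * (lam i - 1) / (1 + u * (lam i - 1))) (Set.uIcc (0:ℝ) 1) := by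
    intro u hu
    rw [Set.uIcc_of_le (by norm_num : (0:ℝ) ≤ 1)] at hu
    simp only
    rw [Binv_conj hA hu, trace_mul_conj_diag hUr, hsand, Complex.re_sum]
    refine Finset.sum_congr rfl (fun i _ => ?_)
    rw [Matrix.diagonal_apply_eq, ← Complex.ofReal_mul, Complex.ofReal_re, div_eq_mul_inv]
    ring
  rw [intervalIntegral.integral_congr hEq,
    intervalIntegral.integral_finset_sum (fun i _ => scalar_integrable1 (hpos i)),
    Finset.sum_congr rfl (fun i (_ : i ∈ Finset.univ) => scalar1 (hpos i)),
    mlog_eq hA.1, trace_mul_conj_diag hUr, sand_spec hA.1, Complex.re_sum]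
  exact Finset.sum_congr rfl (fun i _ => by
    rw [Matrix.diagonal_apply_eq, ← Complex.ofReal_mul, Complex.ofReal_re])

lemma scalar_integrable2 {l : ℝ} (hl : 0 < l) :
    IntervalIntegrable
      (fun u : ℝ => (2*l-1)/(1+u*(l-1)) - u*(l*(l-1))/(1+u*(l-1))^2) MeasureTheory.volume 0 1 := by
  apply ContinuousOn.intervalIntegrable
  rw [Set.uIcc_of_le (by norm_num)]
  apply ContinuousOn.sub
  · exact continuousOn_const.div (scalar_cont hl) (fun u hu => (denom_pos hl hu).ne')
  · exact ContinuousOn.div (by fun_prop) ((scalar_cont hl).pow 2)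
      (fun u hu => pow_ne_zero _ (denom_pos hl hu).ne')

lemma unsand {U : Matrix n n ℂ} (hUl : U * star U = 1) {M D : Matrix n n ℂ}
    (h : star U * M * U = D) : M = U * D * star U := by
  rw [← h, show U * (star U * M * U) * star U = (U * star U) * M * (U * star U) from by
    simp only [mul_assoc], hUl, one_mul, mul_one]

lemma trace_sand {U : Matrix n n ℂ} (hUl : U * star U = 1) (X : Matrix n n ℂ) :
    Matrix.trace (star U * X * U) = Matrix.trace X := by
  rw [Matrix.trace_mul_cycle, hUl, one_mul]

lemma keyB {A : Matrix n n ℂ} (hA : A.PosDef) (X : Matrix n n ℂ) :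
    ∫ u in (0:ℝ)..1, (Matrix.trace ((X*A + A*X - X) * Ring.inverse (Bmat A u)
        - (A*A - A) * (Ring.inverse (Bmat A u) * ((u:ℂ) • X) * Ring.inverse (Bmat A u)))).re
      = (Matrix.trace (X * mlog A)).re + (Matrix.trace X).re := by
  have hUl := eigvec_unitary_left hA.1
  have hUr := eigvec_unitary_right hA.1
  set U := (hA.1.eigenvectorUnitary : Matrix n n ℂ) with hUdef
  set lam := hA.1.eigenvalues with hlamdef
  set H := star U * X * U with hHdef
  have hpos : ∀ i, 0 < lam i := hA.eigenvalues_pos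
  have hM : A * A - A = U * Matrix.diagonal (fun i => ((lam i * lam i - lam i : ℝ) : ℂ)) * star U :=
    unsand hUl (by rw [Matrix.mul_sub, Matrix.sub_mul, sand_mul hUl, sand_spec hA.1, diag_sq_sub])
  have hEq : Set.EqOn
      (fun u => (Matrix.trace ((X*A + A*X - X) * Ring.inverse (Bmat A u)
        - (A*A - A) * (Ring.inverse (Bmat A u) * ((u:ℂ) • X) * Ring.inverse (Bmat A u)))).re)
      (fun u => ∑ i, (H i i).re *
        ((2*lam i-1)/(1+u*(lam i-1)) - u*(lam i*(lam i-1))/(1+u*(lam i-1))^2)) (Set.uIcc (0:ℝ) 1) := by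
    intro u hu
    rw [Set.uIcc_of_le (by norm_num : (0:ℝ) ≤ 1)] at hu
    simp only
    set cinv : n → ℝ := fun i => (1 + u * (lam i - 1))⁻¹ with hcinv
    have hBinv : Ring.inverse (Bmat A u)
        = U * Matrix.diagonal (fun i => (cinv i : ℂ)) * star U := Binv_conj hA hu
    -- first trace
    have h1 : Matrix.trace ((X*A + A*X - X) * Ring.inverse (Bmat A u))
        = ∑ i, (H i i * (lam i : ℂ) + (lam i : ℂ) * H i i - H i i) * (cinv i : ℂ) := by
      rw [hBinv, trace_mul_conj_diag hUr]
      refine Finset.sum_congr rfl (fun i _ => ?_)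
      congr 1
      rw [Matrix.mul_sub, Matrix.sub_mul, Matrix.mul_add, Matrix.add_mul,
        sand_mul hUl, sand_mul hUl, sand_spec hA.1, ← hHdef]
      simp [Matrix.sub_apply, Matrix.add_apply, Matrix.mul_diagonal, Matrix.diagonal_mul]
      rfl
    -- second trace
    have h2 : Matrix.trace ((A*A - A) *
          (Ring.inverse (Bmat A u) * ((u:ℂ) • X) * Ring.inverse (Bmat A u)))
        = (u:ℂ) * ∑ i, H i i * ((cinv i : ℂ) * ((lam i * lam i - lam i : ℝ) : ℂ) * (cinv i : ℂ)) := by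
      rw [show Ring.inverse (Bmat A u) * ((u:ℂ) • X) * Ring.inverse (Bmat A u)
          = (u:ℂ) • (Ring.inverse (Bmat A u) * X * Ring.inverse (Bmat A u)) from by
        rw [Matrix.mul_smul, Matrix.smul_mul], Matrix.mul_smul, Matrix.trace_smul, smul_eq_mul]
      congr 1
      set Q := Ring.inverse (Bmat A u) with hQ
      rw [show (A*A - A) * (Q * X * Q) = ((A*A-A) * Q) * X * Q from by simp only [mul_assoc],
        Matrix.trace_mul_cycle,
        show Q * ((A*A-A) * Q) = Q * (A*A-A) * Q from by simp only [mul_assoc],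
        Matrix.trace_mul_comm]
      rw [hBinv, hM, conj_mul_conj hUr, conj_mul_conj hUr,
        Matrix.diagonal_mul_diagonal, Matrix.diagonal_mul_diagonal, trace_mul_conj_diag hUr,
        ← hHdef]
    rw [Matrix.trace_sub, Complex.sub_re, h1, h2]
    simp only [Complex.re_sum, Complex.im_sum, Complex.mul_re, Complex.mul_im, Complex.add_re,
      Complex.add_im, Complex.sub_re, Complex.sub_im, Complex.ofReal_re, Complex.ofReal_im,
      Complex.ofReal_mul, mul_zero, zero_mul, sub_zero, add_zero, zero_add]
    rw [Finset.mul_sum, ← Finset.sum_sub_distrib]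
    refine Finset.sum_congr rfl (fun i _ => ?_)
    have hd := (denom_pos (hpos i) hu).ne'
    simp only [hcinv]
    field_simp
    ring
  rw [intervalIntegral.integral_congr hEq,
    intervalIntegral.integral_finset_sum
      (fun i _ => (scalar_integrable2 (hpos i)).const_mul ((H i i).re)),
    Finset.sum_congr rfl (fun i (_ : i ∈ Finset.univ) => by
      rw [intervalIntegral.integral_const_mul, scalar2 (hpos i)]),
    mlog_eq hA.1, trace_mul_conj_diag hUr, ← hHdef, Complex.re_sum]
  rw [show Matrix.trace X = Matrix.trace H from (trace_sand hUl X).symm]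
  rw [show Matrix.trace H = ∑ i, H i i from by simp [Matrix.trace, Matrix.diag]]
  rw [Complex.re_sum, ← Finset.sum_add_distrib]
  refine Finset.sum_congr rfl (fun i _ => ?_)
  simp only [Complex.mul_re, Complex.ofReal_re, Complex.ofReal_im, mul_zero, sub_zero]
  ring

section deriv
variable {n : Type*} [Fintype n] [DecidableEq n]

attribute [local instance] Matrix.linftyOpNormedRing Matrix.linftyOpNormedAlgebra
  Matrix.linftyOpNormedSpace

lemma hasDerivAt_matrix {f : ℝ → Matrix n n ℂ} {f' : Matrix n n ℂ} {t : ℝ}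
    (h : ∀ i j, HasDerivAt (fun s => f s i j) (f' i j) t) : HasDerivAt f f' t := by
  have e : ∀ (M : Matrix n n ℂ), ∑ i, ∑ j, M i j • Matrix.single i j (1:ℂ) = M := by
    intro M
    conv_rhs => rw [Matrix.matrix_eq_sum_single M]
    refine Finset.sum_congr rfl (fun i _ => Finset.sum_congr rfl (fun j _ => ?_))
    rw [Matrix.smul_single, smul_eq_mul, mul_one]
  have H : HasDerivAt (fun s => ∑ i, ∑ j, (f s i j) • Matrix.single i j (1:ℂ))
      (∑ i, ∑ j, (f' i j) • Matrix.single i j (1:ℂ)) t :=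
    HasDerivAt.fun_sum (fun i _ => HasDerivAt.fun_sum (fun j _ => (h i j).smul_const _))
  rw [e] at H
  convert H using 1
  funext s
  rw [e]

noncomputable def traceReCLM : Matrix n n ℂ →L[ℝ] ℝ :=
  Complex.reCLM.comp
    ((LinearMap.toContinuousLinearMap (Matrix.traceLinearMap n ℂ ℂ)).restrictScalars ℝ)

@[simp] lemma traceReCLM_apply (A : Matrix n n ℂ) : traceReCLM A = (Matrix.trace A).re := rfl

lemma hasDerivAt_Phi {ρ ρ' : ℝ → Matrix n n ℂ} {t : ℝ}
    (hρ : HasDerivAt ρ (ρ' t) t) (u : ℝ) (hunit : IsUnit (Bmat (ρ t) u)) :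
    HasDerivAt (fun s => (Matrix.trace ((ρ s * ρ s - ρ s) * Ring.inverse (Bmat (ρ s) u))).re)
      ((Matrix.trace ((ρ' t * ρ t + ρ t * ρ' t - ρ' t) * Ring.inverse (Bmat (ρ t) u)
        - (ρ t * ρ t - ρ t) *
          (Ring.inverse (Bmat (ρ t) u) * ((u:ℂ) • ρ' t) * Ring.inverse (Bmat (ρ t) u)))).re) t := by
  obtain ⟨x, hx⟩ := hunit
  have hB : HasDerivAt (fun s => Bmat (ρ s) u) ((u:ℂ) • ρ' t) t := by
    have := ((hρ.sub_const (1 : Matrix n n ℂ)).const_smul ((u:ℂ))).const_add (1 : Matrix n n ℂ)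
    exact this
  have hInv : HasDerivAt (fun s => Ring.inverse (Bmat (ρ s) u))
      (-(Ring.inverse (Bmat (ρ t) u) * ((u:ℂ) • ρ' t) * Ring.inverse (Bmat (ρ t) u))) t := by
    have hfd := hasFDerivAt_ringInverse (𝕜 := ℝ) x
    rw [hx] at hfd
    have hf := hfd.comp_hasDerivAt t hB
    have hxinv : (↑x⁻¹ : Matrix n n ℂ) = Ring.inverse (Bmat (ρ t) u) := by
      rw [← hx, Ring.inverse_unit]
    simp only [hxinv, ContinuousLinearMap.neg_apply, ContinuousLinearMap.mulLeftRight_apply] at hf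
    exact hf
  have hM : HasDerivAt (fun s => ρ s * ρ s - ρ s) (ρ' t * ρ t + ρ t * ρ' t - ρ' t) t :=
    (hρ.mul hρ).sub hρ
  have hprod := hM.mul hInv
  have := (traceReCLM (n := n)).hasFDerivAt.comp_hasDerivAt t hprod
  rw [mul_neg, ← sub_eq_add_neg] at this
  exact this

end deriv

section ent
variable {n : Type*} [Fintype n] [DecidableEq n]

lemma conj_pow' {U : Matrix n n ℂ} (hUl : U * star U = 1) (hUr : star U * U = 1)
    (D : Matrix n n ℂ) (k : ℕ) : (U * D * star U) ^ k = U * D ^ k * star U := by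
  induction k with
  | zero => rw [pow_zero, pow_zero, mul_one, hUl]
  | succ k ih => rw [pow_succ, pow_succ, ih, conj_mul_conj hUr]

lemma aeval_conj {U : Matrix n n ℂ} (hUl : U * star U = 1) (hUr : star U * U = 1)
    (D : Matrix n n ℂ) (q : Polynomial ℂ) :
    Polynomial.aeval (U * D * star U) q = U * Polynomial.aeval D q * star U := by
  induction q using Polynomial.induction_on' with
  | add p q hp hq => rw [map_add, hp, hq, map_add, Matrix.mul_add, Matrix.add_mul]
  | monomial k c =>
    rw [Polynomial.aeval_monomial, Polynomial.aeval_monomial, conj_pow' hUl hUr,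
      Algebra.algebraMap_eq_smul_one, smul_mul_assoc, smul_mul_assoc, one_mul, one_mul,
      Matrix.mul_smul, Matrix.smul_mul]

lemma aeval_diag (v : n → ℂ) (q : Polynomial ℂ) :
    Polynomial.aeval (Matrix.diagonal v) q
      = Matrix.diagonal (fun i => Polynomial.eval (v i) q) := by
  induction q using Polynomial.induction_on' with
  | add p q hp hq =>
    rw [map_add, hp, hq]
    ext i j
    rcases eq_or_ne i j with rfl | hij
    · simp [Matrix.diagonal_apply_eq]
    · simp [Matrix.diagonal_apply_ne _ hij]
  | monomial k c =>
    rw [Polynomial.aeval_monomial, Matrix.diagonal_pow, Algebra.algebraMap_eq_smul_one]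
    ext i j
    rcases eq_or_ne i j with rfl | hij
    · simp [Matrix.diagonal_apply_eq, Polynomial.eval_monomial]
    · simp [Matrix.diagonal_apply_ne _ hij, Matrix.one_apply_ne hij]

lemma trace_aeval {A : Matrix n n ℂ} (hA : A.IsHermitian) (q : Polynomial ℂ) :
    Matrix.trace (Polynomial.aeval A q) = ∑ i, Polynomial.eval ((hA.eigenvalues i : ℂ)) q := by
  conv_lhs => rw [spectral' hA]
  rw [aeval_conj (eigvec_unitary_left hA) (eigvec_unitary_right hA), aeval_diag,
    trace_conj (eigvec_unitary_right hA), Matrix.trace_diagonal]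

lemma trace_mul_mlog {A : Matrix n n ℂ} (hA : A.IsHermitian) :
    (Matrix.trace (A * mlog A)).re = ∑ i, hA.eigenvalues i * Real.log (hA.eigenvalues i) := by
  rw [mlog_eq hA, trace_mul_conj_diag (eigvec_unitary_right hA), sand_spec hA, Complex.re_sum]
  exact Finset.sum_congr rfl (fun i _ => by
    rw [Matrix.diagonal_apply_eq, ← Complex.ofReal_mul, Complex.ofReal_re])

lemma eig_mem_Icc {A : Matrix n n ℂ} (hdm : IsDensityMatrix A) (i : n) :
    hdm.1.1.eigenvalues i ∈ Set.Icc (0:ℝ) 1 := by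
  have hnn : ∀ j, 0 ≤ hdm.1.1.eigenvalues j := hdm.1.eigenvalues_nonneg
  have hsum : ∑ j, hdm.1.1.eigenvalues j = 1 := by
    have h1 : Matrix.trace A = ∑ j, ((hdm.1.1.eigenvalues j : ℂ)) := by
      conv_lhs => rw [spectral' hdm.1.1]
      rw [trace_conj (eigvec_unitary_right hdm.1.1), Matrix.trace_diagonal]
    have := hdm.2
    rw [h1] at this
    have : ((∑ j, hdm.1.1.eigenvalues j : ℝ) : ℂ) = ((1:ℝ) : ℂ) := by push_cast; simpa using this
    exact_mod_cast this
  exact ⟨hnn i, hsum ▸ Finset.single_le_sum (fun j _ => hnn j) (Finset.mem_univ i)⟩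

lemma tendsto_trace_mlog {ρ : ℝ → Matrix n n ℂ} (hc : Continuous ρ)
    (hdm : ∀ t, IsDensityMatrix (ρ t)) :
    Filter.Tendsto (fun t => (Matrix.trace (ρ t * mlog (ρ t))).re) (nhds (0:ℝ))
      (nhds ((Matrix.trace (ρ 0 * mlog (ρ 0))).re)) := by
  rw [Metric.tendsto_nhds]
  intro δ hδ
  set m := (Fintype.card n : ℝ) with hm
  have hm0 : 0 ≤ m := Nat.cast_nonneg _
  obtain ⟨p, hp⟩ := exists_polynomial_near_of_continuousOn 0 1 (fun x => x * Real.log x)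
    Real.continuous_mul_log.continuousOn (δ/(4*(m+1))) (by positivity)
  set G : ℝ → ℝ := fun t =>
    (Matrix.trace (Polynomial.aeval (ρ t) (p.map (algebraMap ℝ ℂ)))).re with hG
  have hGc : Continuous G :=
    Complex.continuous_re.comp ((Polynomial.continuous_aeval _).comp hc).matrix_trace
  have hGeq : ∀ t, G t = ∑ i, Polynomial.eval ((hdm t).1.1.eigenvalues i) p := by
    intro t
    rw [hG]
    simp only
    rw [trace_aeval (hdm t).1.1, Complex.re_sum]
    refine Finset.sum_congr rfl (fun i _ => ?_)
    rw [show ((hdm t).1.1.eigenvalues i : ℂ) = algebraMap ℝ ℂ ((hdm t).1.1.eigenvalues i) from rfl,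
      Polynomial.eval_map, Polynomial.eval₂_hom]
    simp
  have hbound : ∀ t, |(Matrix.trace (ρ t * mlog (ρ t))).re - G t| ≤ m * (δ/(4*(m+1))) := by
    intro t
    rw [trace_mul_mlog (hdm t).1.1, hGeq t, ← Finset.sum_sub_distrib]
    refine le_trans (Finset.abs_sum_le_sum_abs _ _) ?_
    have : ∀ i ∈ Finset.univ, |(hdm t).1.1.eigenvalues i * Real.log ((hdm t).1.1.eigenvalues i)
        - Polynomial.eval ((hdm t).1.1.eigenvalues i) p| ≤ δ/(4*(m+1)) := by
      intro i _
      rw [abs_sub_comm]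
      exact (hp _ (eig_mem_Icc (hdm t) i)).le
    refine le_trans (Finset.sum_le_card_nsmul _ _ _ this) ?_
    rw [nsmul_eq_mul]
    simp [hm, Finset.card_univ]
  have hG0 := Metric.tendsto_nhds.mp (hGc.tendsto 0) (δ/4) (by positivity)
  filter_upwards [hG0] with t ht
  have h1 := hbound t
  have h2 := hbound 0
  have hmd : m * (δ/(4*(m+1))) < δ/4 := by
    have h : m / (m+1) < 1 := by
      rw [div_lt_one (by linarith)]; linarith
    calc m * (δ/(4*(m+1))) = (δ/4) * (m/(m+1)) := by
          field_simp
      _ < (δ/4) * 1 := mul_lt_mul_of_pos_left h (by positivity)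
      _ = δ/4 := mul_one _
  rw [Real.dist_eq] at ht ⊢
  calc |(Matrix.trace (ρ t * mlog (ρ t))).re - (Matrix.trace (ρ 0 * mlog (ρ 0))).re|
      ≤ |(Matrix.trace (ρ t * mlog (ρ t))).re - G t| + |G t - G 0|
        + |G 0 - (Matrix.trace (ρ 0 * mlog (ρ 0))).re| := by
        have := abs_sub_le ((Matrix.trace (ρ t * mlog (ρ t))).re) (G t)
          ((Matrix.trace (ρ 0 * mlog (ρ 0))).re)
        have h4 := abs_sub_le (G t) (G 0) ((Matrix.trace (ρ 0 * mlog (ρ 0))).re)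
        linarith
    _ < δ := by
        rw [abs_sub_comm] at h2
        linarith

end ent

section main
open intervalIntegral Set MeasureTheory Filter
variable {n : Type*} [Fintype n] [DecidableEq n]

attribute [local instance] Matrix.linftyOpNormedRing Matrix.linftyOpNormedAlgebra
  Matrix.linftyOpNormedSpace

lemma conj_diag_unit {U : Matrix n n ℂ} (hUl : U * star U = 1) (hUr : star U * U = 1)
    {v : n → ℂ} (hv : ∀ i, v i ≠ 0) : IsUnit (U * Matrix.diagonal v * star U) := by
  have key : ∀ (a b : n → ℂ), (∀ i, a i * b i = 1) →
      (U * Matrix.diagonal a * star U) * (U * Matrix.diagonal b * star U) = 1 := by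
    intro a b hab
    rw [conj_mul_conj hUr, Matrix.diagonal_mul_diagonal,
      show (Matrix.diagonal fun i => a i * b i) = (1 : Matrix n n ℂ) by
        rw [show (fun i => a i * b i) = fun _ => (1:ℂ) from funext hab, Matrix.diagonal_one],
      mul_one, hUl]
  exact ⟨⟨U * Matrix.diagonal v * star U, U * Matrix.diagonal (fun i => (v i)⁻¹) * star U,
    key _ _ (fun i => mul_inv_cancel₀ (hv i)),
    key _ _ (fun i => inv_mul_cancel₀ (hv i))⟩, rfl⟩

lemma Bmat_unit {A : Matrix n n ℂ} (hA : A.PosDef) {u : ℝ} (hu : u ∈ Set.Icc (0:ℝ) 1) :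
    IsUnit (Bmat A u) := by
  rw [Bmat_conj hA.1 u]
  exact conj_diag_unit (eigvec_unitary_left hA.1) (eigvec_unitary_right hA.1)
    (fun i => by exact_mod_cast (denom_pos (hA.eigenvalues_pos i) hu).ne')

theorem quasistatic_integral' {d : ℕ}
    (ρ ρ' : ℝ → Matrix (Fin d) (Fin d) ℂ)
    (hderiv : ∀ t : ℝ, ∀ i j, HasDerivAt (fun s => ρ s i j) (ρ' t i j) t)
    (hcont : Continuous ρ')
    (hdm : ∀ t : ℝ, IsDensityMatrix (ρ t))
    (hfaithful : ∀ t ∈ Set.Ioc (0 : ℝ) 1, (ρ t).PosDef) :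
    Filter.Tendsto
      (fun ε : ℝ => ∫ t in ε..1, (Matrix.trace (ρ' t * mlog (ρ t))).re)
      (nhdsWithin 0 (Set.Ioi 0)) (nhds (vnEnt (ρ 0) - vnEnt (ρ 1))) := by
  classical
  have hρc : Continuous ρ := continuous_matrix
    (fun i j => continuous_iff_continuousAt.mpr (fun t => (hderiv t i j).continuousAt))
  have hρd : ∀ t, HasDerivAt ρ (ρ' t) t := fun t => hasDerivAt_matrix (hderiv t)
  -- trace of derivative vanishes
  have htr0 : ∀ t, Matrix.trace (ρ' t) = 0 := by
    intro t
    have h1 : HasDerivAt (fun s => Matrix.trace (ρ s)) (Matrix.trace (ρ' t)) t := by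
      have h2 : HasDerivAt (fun s => ∑ i, ρ s i i) (∑ i, ρ' t i i) t :=
        HasDerivAt.fun_sum (fun i _ => hderiv t i i)
      simpa [Matrix.trace, Matrix.diag] using h2
    rw [show (fun s => Matrix.trace (ρ s)) = fun _ => (1:ℂ) from funext (fun s => (hdm s).2)] at h1
    exact h1.unique (hasDerivAt_const t 1)
  -- joint continuity of B and its inverse
  have hBcont : Continuous (fun q : ℝ × ℝ => Bmat (ρ q.1) q.2) := by
    unfold Bmat
    exact continuous_const.add ((Complex.continuous_ofReal.comp continuous_snd).smul
      ((hρc.comp continuous_fst).sub continuous_const))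
  have hInvCont : ∀ q : ℝ × ℝ, IsUnit (Bmat (ρ q.1) q.2) →
      ContinuousAt (fun q : ℝ × ℝ => Ring.inverse (Bmat (ρ q.1) q.2)) q := by
    intro q hq
    obtain ⟨x, hx⟩ := hq
    have h1 : ContinuousAt Ring.inverse (Bmat (ρ q.1) q.2) := by
      rw [← hx]; exact NormedRing.inverse_continuousAt x
    have h2 := ContinuousAt.comp (f := fun q : ℝ × ℝ => Bmat (ρ q.1) q.2) (x := q) h1
      hBcont.continuousAt
    exact h2
  -- the two-variable integrand
  set φf : ℝ × ℝ → ℝ := fun q =>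
    (Matrix.trace ((ρ' q.1 * ρ q.1 + ρ q.1 * ρ' q.1 - ρ' q.1) * Ring.inverse (Bmat (ρ q.1) q.2)
      - (ρ q.1 * ρ q.1 - ρ q.1) * (Ring.inverse (Bmat (ρ q.1) q.2) * ((q.2:ℂ) • ρ' q.1)
          * Ring.inverse (Bmat (ρ q.1) q.2)))).re with hφf
  have hρ'c : Continuous (fun q : ℝ × ℝ => ρ' q.1) := hcont.comp continuous_fst
  have hρcq : Continuous (fun q : ℝ × ℝ => ρ q.1) := hρc.comp continuous_fst
  have hφcont : ∀ q : ℝ × ℝ, IsUnit (Bmat (ρ q.1) q.2) → ContinuousAt φf q := by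
    intro q hq
    have hI := hInvCont q hq
    have inner : ContinuousAt (fun q : ℝ × ℝ =>
        (ρ' q.1 * ρ q.1 + ρ q.1 * ρ' q.1 - ρ' q.1) * Ring.inverse (Bmat (ρ q.1) q.2)
          - (ρ q.1 * ρ q.1 - ρ q.1) * (Ring.inverse (Bmat (ρ q.1) q.2) * ((q.2:ℂ) • ρ' q.1)
              * Ring.inverse (Bmat (ρ q.1) q.2))) q := by
      apply ContinuousAt.sub
      · exact (((hρ'c.continuousAt.mul hρcq.continuousAt).add
          (hρcq.continuousAt.mul hρ'c.continuousAt)).sub hρ'c.continuousAt).mul hI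
      · exact ((hρcq.continuousAt.mul hρcq.continuousAt).sub hρcq.continuousAt).mul
          ((hI.mul ((Complex.continuous_ofReal.comp continuous_snd).continuousAt.smul
            hρ'c.continuousAt)).mul hI)
    have h3 := ContinuousAt.comp (x := q) (traceReCLM (n := Fin d)).continuous.continuousAt inner
    exact h3
  -- key identity for each ε ∈ (0,1]
  have key : ∀ ε ∈ Ioc (0:ℝ) 1,
      ∫ t in ε..1, (Matrix.trace (ρ' t * mlog (ρ t))).re = vnEnt (ρ ε) - vnEnt (ρ 1) := by
    intro ε hε
    obtain ⟨hε0, hε1⟩ := hε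
    have hsub : Icc ε 1 ⊆ Ioc 0 1 := fun t ht => ⟨lt_of_lt_of_le hε0 ht.1, ht.2⟩
    have hpd : ∀ t ∈ Icc ε 1, (ρ t).PosDef := fun t ht => hfaithful t (hsub ht)
    have hunit : ∀ t ∈ Icc ε 1, ∀ u ∈ Icc (0:ℝ) 1, IsUnit (Bmat (ρ t) u) :=
      fun t ht u hu => Bmat_unit (hpd t ht) hu
    have hstepA : EqOn (fun t => (Matrix.trace (ρ' t * mlog (ρ t))).re)
        (fun t => ∫ u in (0:ℝ)..1, φf (t, u)) (uIcc ε 1) := by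
      intro t ht
      rw [uIcc_of_le hε1] at ht
      simp only [hφf]
      rw [keyB (hpd t ht) (ρ' t), htr0 t, Complex.zero_re, add_zero]
    have hPhiDeriv : ∀ u ∈ Icc (0:ℝ) 1, ∀ t ∈ uIcc ε 1,
        HasDerivAt (fun s =>
            (Matrix.trace ((ρ s * ρ s - ρ s) * Ring.inverse (Bmat (ρ s) u))).re) (φf (t,u)) t := by
      intro u hu t ht
      rw [uIcc_of_le hε1] at ht
      exact hasDerivAt_Phi (hρd t) u (hunit t ht u hu)
    have hFTC : ∀ u ∈ Icc (0:ℝ) 1,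
        ∫ t in ε..1, φf (t, u)
          = (Matrix.trace ((ρ 1 * ρ 1 - ρ 1) * Ring.inverse (Bmat (ρ 1) u))).re
            - (Matrix.trace ((ρ ε * ρ ε - ρ ε) * Ring.inverse (Bmat (ρ ε) u))).re := by
      intro u hu
      apply integral_eq_sub_of_hasDerivAt (hPhiDeriv u hu)
      apply ContinuousOn.intervalIntegrable
      intro t ht
      rw [uIcc_of_le hε1] at ht
      have hcomp := ContinuousAt.comp (f := fun t : ℝ => ((t, u) : ℝ × ℝ)) (x := t)
        (hφcont (t,u) (hunit t ht u hu)) ((continuous_id.prodMk continuous_const).continuousAt)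
      exact hcomp.continuousWithinAt
    have hIcompact : IsCompact (Icc ε 1 ×ˢ Icc (0:ℝ) 1) := isCompact_Icc.prod isCompact_Icc
    have hφcontOn : ContinuousOn φf (Icc ε 1 ×ˢ Icc (0:ℝ) 1) := fun q hq =>
      (hφcont q (hunit q.1 hq.1 q.2 hq.2)).continuousWithinAt
    have hInt : IntegrableOn φf (Ioc ε 1 ×ˢ Ioc (0:ℝ) 1) volume :=
      (hφcontOn.integrableOn_compact hIcompact).mono_set
        (Set.prod_mono Ioc_subset_Icc_self Ioc_subset_Icc_self)
    have hFub : ∫ t in ε..1, ∫ u in (0:ℝ)..1, φf (t, u)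
        = ∫ u in (0:ℝ)..1, ∫ t in ε..1, φf (t, u) := by
      simp only [intervalIntegral.integral_of_le hε1, intervalIntegral.integral_of_le zero_le_one]
      apply MeasureTheory.integral_integral_swap
      rw [show Function.uncurry (fun x y => φf (x, y)) = φf from funext (fun q => by
          cases q; rfl),
        MeasureTheory.Measure.prod_restrict, ← MeasureTheory.Measure.volume_eq_prod]
      exact hInt
    have hintPhi : ∀ t₀ ∈ Icc ε 1, IntervalIntegrable (fun u =>
        (Matrix.trace ((ρ t₀ * ρ t₀ - ρ t₀) * Ring.inverse (Bmat (ρ t₀) u))).re)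
        MeasureTheory.volume 0 1 := by
      intro t₀ ht₀
      apply ContinuousOn.intervalIntegrable
      intro u hu
      rw [uIcc_of_le zero_le_one] at hu
      have hIc : ContinuousAt (fun u : ℝ => Ring.inverse (Bmat (ρ t₀) u)) u :=
        ContinuousAt.comp (f := fun u : ℝ => ((t₀, u) : ℝ × ℝ)) (x := u)
          (hInvCont (t₀, u) (hunit t₀ ht₀ u hu))
          ((continuous_const.prodMk continuous_id).continuousAt)
      have hc2 : ContinuousAt (fun u : ℝ =>
          (ρ t₀ * ρ t₀ - ρ t₀) * Ring.inverse (Bmat (ρ t₀) u)) u := continuousAt_const.mul hIc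
      have hc3 := ContinuousAt.comp (x := u) (traceReCLM (n := Fin d)).continuous.continuousAt hc2
      exact hc3.continuousWithinAt
    rw [integral_congr hstepA, hFub,
      integral_congr (g := fun u =>
        (Matrix.trace ((ρ 1 * ρ 1 - ρ 1) * Ring.inverse (Bmat (ρ 1) u))).re
          - (Matrix.trace ((ρ ε * ρ ε - ρ ε) * Ring.inverse (Bmat (ρ ε) u))).re)
        (fun u hu => hFTC u (by rwa [uIcc_of_le zero_le_one] at hu)),
      intervalIntegral.integral_sub (hintPhi 1 ⟨hε1, le_refl 1⟩) (hintPhi ε ⟨le_refl ε, hε1⟩),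
      keyA (hpd 1 ⟨hε1, le_refl 1⟩), keyA (hpd ε ⟨le_refl ε, hε1⟩)]
    rw [vnEnt, vnEnt]
    ring
  -- pass to the limit
  have hlim := tendsto_trace_mlog hρc hdm
  have hlim2 : Tendsto (fun ε => vnEnt (ρ ε) - vnEnt (ρ 1)) (nhdsWithin 0 (Set.Ioi 0))
      (nhds (vnEnt (ρ 0) - vnEnt (ρ 1))) := by
    have : Tendsto (fun ε => vnEnt (ρ ε)) (nhdsWithin 0 (Set.Ioi 0)) (nhds (vnEnt (ρ 0))) := by
      have := (hlim.mono_left (nhdsWithin_le_nhds (s := Set.Ioi (0:ℝ)))).neg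
      simpa [vnEnt] using this
    exact this.sub_const _
  apply hlim2.congr'
  filter_upwards [Ioc_mem_nhdsGT_of_mem (Set.left_mem_Ico.mpr zero_lt_one)] with ε hε
  exact (key ε hε).symm


end main

/-- **Integral form of the quasi-static energy cost.**
For a continuously differentiable path of density matrices `t ↦ ρ(t)`,
faithful on `(0,1]`, the (possibly improper) integral
`∫₀¹ tr(ρ'(t) log ρ(t)) dt` converges and equals `S(ρ(0)) - S(ρ(1))`. -/
theorem quasistatic_integral {d : ℕ}
    (ρ ρ' : ℝ → Matrix (Fin d) (Fin d) ℂ)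
    (hderiv : ∀ t : ℝ, ∀ i j, HasDerivAt (fun s => ρ s i j) (ρ' t i j) t)
    (hcont : Continuous ρ')
    (hdm : ∀ t : ℝ, IsDensityMatrix (ρ t))
    (hfaithful : ∀ t ∈ Set.Ioc (0 : ℝ) 1, (ρ t).PosDef) :
    Filter.Tendsto
      (fun ε : ℝ => ∫ t in ε..1, (Matrix.trace (ρ' t * mlog (ρ t))).re)
      (nhdsWithin 0 (Set.Ioi 0)) (nhds (vnEnt (ρ 0) - vnEnt (ρ 1))) := by
  exact quasistatic_integral' ρ ρ' hderiv hcont hdm hfaithful
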